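/- Let (g, φ) be a quadratic Lie algebra over a field K of characteristic zero and let I be a minimal nonzero ideal of g such that the restriction of φ to I is nondegenerate. Then I is a simple Lie algebra or I is one-dimensional. -/

import Mathlib

/-- The orthogonal complement `{x ∈ L : φ(x,u) = 0 for all u ∈ U}` of a subspace `U`
relative to a bilinear form `φ`. -/
def perp {K L : Type*} [Field K] [AddCommGroup L] [Module K L]
    (φ : L →ₗ[K] L →ₗ[K] K) (U : Submodule K L) : Submodule K L where
  carrier := {x | ∀ u ∈ U, φ x u = 0}
  add_mem' := by
    intro a b ha hb u hu
    simp [map_add, ha u hu, hb u hu]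
  zero_mem' := by
    intro u hu
    simp
  smul_mem' := by
    intro c a ha u hu
    simp [map_smul, ha u hu]

/-- In a quadratic Lie algebra, any minimal nonzero ideal on which the form restricts
nondegenerately is a simple Lie algebra or is one-dimensional. -/
theorem minimal_nondegenerate_ideal_simple_or_one_dimensional
    {K : Type*} [Field K] [CharZero K]
    {L : Type*} [LieRing L] [LieAlgebra K L] [FiniteDimensional K L]
    (φ : L →ₗ[K] L →ₗ[K] K)
    (hsymm : ∀ x y : L, φ x y = φ y x)
    (hnondeg : ∀ x : L, (∀ y : L, φ x y = 0) → x = 0)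
    (hinv : ∀ x y z : L, φ ⁅x, y⁆ z = φ x ⁅y, z⁆)
    (I : LieIdeal K L)
    (hne : I ≠ ⊥)
    (hmin : ∀ J : LieIdeal K L, J ≤ I → J = ⊥ ∨ J = I)
    (hnd : LieSubmodule.toSubmodule I ⊓ perp φ (LieSubmodule.toSubmodule I) = ⊥) :
    LieAlgebra.IsSimple K I ∨ Module.finrank K I = 1 := by
  classical
  set B : LinearMap.BilinForm K L := φ with hB
  have hrefl : B.IsRefl := fun x y h => by rw [hB]; rw [hsymm]; exact h
  -- perp = orthogonal
  have hperp : perp φ (LieSubmodule.toSubmodule I) = B.orthogonal (LieSubmodule.toSubmodule I) := by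
    ext x
    constructor
    · intro hx u hu
      have := hx u hu
      rw [hsymm] at this
      exact this
    · intro hx u hu
      have := hx u hu
      rw [hsymm]
      exact this
  -- perp is closed under bracket with anything
  have hperp_lie : ∀ (z x : L), x ∈ perp φ (LieSubmodule.toSubmodule I) →
      ⁅z, x⁆ ∈ perp φ (LieSubmodule.toSubmodule I) := by
    intro z x hx u hu
    have h1 : ⁅z, x⁆ = -⁅x, z⁆ := by rw [← lie_skew]
    rw [h1, map_neg, LinearMap.neg_apply, hinv]
    have : ⁅z, u⁆ ∈ LieSubmodule.toSubmodule I := I.lie_mem hu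
    rw [hx _ this, neg_zero]
  have hcompl : IsCompl (LieSubmodule.toSubmodule I) (perp φ (LieSubmodule.toSubmodule I)) := by
    rw [hperp]
    rw [LinearMap.BilinForm.isCompl_orthogonal_iff_disjoint hrefl]
    rw [disjoint_iff]
    rw [← hperp]
    exact hnd
  -- bracket of perp elements with I elements vanish
  have hpz : ∀ b ∈ perp φ (LieSubmodule.toSubmodule I), ∀ m ∈ I, ⁅b, m⁆ = 0 := by
    intro b hb m hm
    have h1 : ⁅b, m⁆ ∈ LieSubmodule.toSubmodule I := I.lie_mem hm
    have h2 : ⁅b, m⁆ ∈ perp φ (LieSubmodule.toSubmodule I) := by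
      have := hperp_lie m b hb
      rw [← lie_skew]
      exact (perp φ _).neg_mem this
    have : ⁅b, m⁆ ∈ LieSubmodule.toSubmodule I ⊓ perp φ (LieSubmodule.toSubmodule I) :=
      ⟨h1, h2⟩
    rw [hnd] at this
    exact this
  rcases hmin ⁅I, I⁆ (LieSubmodule.lie_le_right I I) with habs | hder
  · -- abelian case: I is central, hence one-dimensional
    right
    have hcentral : ∀ (z : L), ∀ m ∈ I, ⁅z, m⁆ = 0 := by
      intro z m hm
      have h1 : ⁅z, m⁆ ∈ LieSubmodule.toSubmodule I := I.lie_mem hm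
      have h2 : ⁅z, m⁆ ∈ perp φ (LieSubmodule.toSubmodule I) := by
        intro u hu
        rw [hinv]
        have : ⁅m, u⁆ ∈ (⁅I, I⁆ : LieIdeal K L) := LieSubmodule.lie_mem_lie hm hu
        rw [habs] at this
        rw [LieSubmodule.mem_bot] at this
        rw [this, map_zero]
      have : ⁅z, m⁆ ∈ LieSubmodule.toSubmodule I ⊓ perp φ (LieSubmodule.toSubmodule I) :=
        ⟨h1, h2⟩
      rw [hnd] at this
      exact this
    obtain ⟨x, hxI, hx0⟩ : ∃ x ∈ I, x ≠ 0 := by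
      by_contra h
      push_neg at h
      exact hne (LieSubmodule.eq_bot_iff I |>.2 h)
    have hspan_le : Submodule.span K {x} ≤ LieSubmodule.toSubmodule I := by
      rw [Submodule.span_le, Set.singleton_subset_iff]
      exact hxI
    let J : LieIdeal K L :=
      { toSubmodule := Submodule.span K {x}
        lie_mem := by
          intro z m hm
          have hmI : m ∈ I := hspan_le hm
          have : ⁅z, m⁆ = 0 := hcentral z m hmI
          rw [this]
          exact (Submodule.span K {x}).zero_mem }
    have hJI : J ≤ I := by
      intro y hy
      exact hspan_le hy
    rcases hmin J hJI with hJbot | hJeq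
    · exfalso
      have : x ∈ J := Submodule.mem_span_singleton_self x
      rw [hJbot] at this
      exact hx0 this
    · have : LieSubmodule.toSubmodule I = Submodule.span K {x} := by
        rw [← hJeq]
      rw [show (Module.finrank K I) = Module.finrank K (LieSubmodule.toSubmodule I) from rfl, this]
      exact finrank_span_singleton hx0
  · -- simple case
    left
    constructor
    · intro J
      -- map J to an ideal of L
      let J' : LieIdeal K L :=
        { toSubmodule := (LieSubmodule.toSubmodule J).map (LieSubmodule.toSubmodule I).subtype
          lie_mem := by
            intro z m hm
            obtain ⟨j, hjJ, hjm⟩ := hm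
            have hmI : m ∈ I := by rw [← hjm]; exact j.2
            have hz : z ∈ LieSubmodule.toSubmodule I ⊔ perp φ (LieSubmodule.toSubmodule I) := by
              rw [hcompl.sup_eq_top]; trivial
            obtain ⟨a, ha, b, hb, hab⟩ := Submodule.mem_sup.mp hz
            have hbm : ⁅b, m⁆ = 0 := hpz b hb m hmI
            have : ⁅z, m⁆ = ⁅a, m⁆ := by
              rw [← hab, add_lie, hbm, add_zero]
            rw [this]
            refine ⟨⁅(⟨a, ha⟩ : I), j⁆, J.lie_mem hjJ, ?_⟩
            show ((⁅(⟨a, ha⟩ : I), j⁆ : I) : L) = ⁅a, m⁆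
            rw [← hjm]
            rfl }
      have hJ'I : J' ≤ I := by
        rintro y ⟨j, hjJ, hjy⟩
        rw [← hjy]
        exact j.2
      have hinj : Function.Injective (LieSubmodule.toSubmodule I).subtype :=
        Subtype.val_injective
      rcases hmin J' hJ'I with hb | ht
      · left
        have : (LieSubmodule.toSubmodule J).map (LieSubmodule.toSubmodule I).subtype = ⊥ := by
          have := congrArg LieSubmodule.toSubmodule hb
          rw [LieSubmodule.bot_toSubmodule] at this
          exact this
        have hJb : LieSubmodule.toSubmodule J = ⊥ := by
          apply Submodule.map_injective_of_injective hinj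
          rw [this, Submodule.map_bot]
        ext y
        rw [← LieSubmodule.mem_toSubmodule, hJb]
        simp
      · right
        have h1 : (LieSubmodule.toSubmodule J).map (LieSubmodule.toSubmodule I).subtype
            = LieSubmodule.toSubmodule I := by
          have := congrArg LieSubmodule.toSubmodule ht
          exact this
        have h2 : (⊤ : Submodule K I).map (LieSubmodule.toSubmodule I).subtype
            = LieSubmodule.toSubmodule I := by
          rw [Submodule.map_top, Submodule.range_subtype]
        have : LieSubmodule.toSubmodule J = ⊤ :=
          Submodule.map_injective_of_injective hinj (h1.trans h2.symm)
        ext y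
        rw [← LieSubmodule.mem_toSubmodule, this]
        simp
    · intro habelian
      have : (⁅I, I⁆ : LieIdeal K L) = ⊥ :=
        (LieSubmodule.lie_abelian_iff_lie_self_eq_bot I).mp habelian
      rw [hder] at this
      exact hne this
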